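/- For every positive integer n, the set of all permutations σ of Fin (2n) satisfying ⌊σ(i)/n⌋ ≠ ⌊i/n⌋ for all i can be partitioned into subsets such that each subset F satisfies: for every ordered pair (i,j) with ⌊j/n⌋ ≠ ⌊i/n⌋, exactly one permutation σ ∈ F has σ(i) = j. -/

import Mathlib

namespace Stmt4Aux

/-- Rotation by 1 within each block of size `n`. -/
noncomputable def rp (n : ℕ) (hn : 0 < n) : Equiv.Perm (Fin (2 * n)) :=
  Equiv.ofBijective
    (fun i => ⟨n * ((i : ℕ) / n) + (((i : ℕ) % n + 1) % n), by
      have h1 : (i : ℕ) / n ≤ 1 := by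
        have h0 : (i : ℕ) / n < 2 := Nat.div_lt_of_lt_mul (by have := i.isLt; omega)
        omega
      have h2 : ((i : ℕ) % n + 1) % n < n := Nat.mod_lt _ hn
      have h3 : n * ((i : ℕ) / n) ≤ n * 1 := Nat.mul_le_mul_left n h1
      omega⟩)
    (Finite.injective_iff_bijective.mp (by
      intro i j h
      have hv : n * ((i : ℕ) / n) + (((i : ℕ) % n + 1) % n)
          = n * ((j : ℕ) / n) + (((j : ℕ) % n + 1) % n) := congrArg Fin.val h
      have hi2 : ((i : ℕ) % n + 1) % n < n := Nat.mod_lt _ hn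
      have hj2 : ((j : ℕ) % n + 1) % n < n := Nat.mod_lt _ hn
      have hdiv : (i : ℕ) / n = (j : ℕ) / n := by
        have := congrArg (· / n) hv
        simpa [Nat.mul_add_div hn, Nat.div_eq_of_lt hi2, Nat.div_eq_of_lt hj2] using this
      have hm : ((i : ℕ) % n + 1) % n = ((j : ℕ) % n + 1) % n := by
        have h3 : n * ((i : ℕ) / n) = n * ((j : ℕ) / n) := by rw [hdiv]
        omega
      have hmod : (i : ℕ) % n = (j : ℕ) % n := by
        have h4 : ((i : ℕ) % n + 1) ≡ ((j : ℕ) % n + 1) [MOD n] := hm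
        have h5 : (i : ℕ) % n ≡ (j : ℕ) % n [MOD n] := h4.add_right_cancel' 1
        have hi' : (i : ℕ) % n < n := Nat.mod_lt _ hn
        have hj' : (j : ℕ) % n < n := Nat.mod_lt _ hn
        calc (i : ℕ) % n = (i : ℕ) % n % n := (Nat.mod_eq_of_lt hi').symm
          _ = (j : ℕ) % n % n := h5
          _ = (j : ℕ) % n := Nat.mod_eq_of_lt hj'
      have hieq : n * ((i : ℕ) / n) + (i : ℕ) % n = (i : ℕ) := Nat.div_add_mod _ n
      have hjeq : n * ((j : ℕ) / n) + (j : ℕ) % n = (j : ℕ) := Nat.div_add_mod _ n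
      apply Fin.ext
      rw [← hieq, ← hjeq, hdiv, hmod]))

variable {n : ℕ}

lemma rp_pow_val (hn : 0 < n) (k : ℕ) :
    ∀ i : Fin (2 * n), (((rp n hn) ^ k) i : ℕ) = n * ((i : ℕ) / n) + (((i : ℕ) % n + k) % n) := by
  induction k with
  | zero =>
    intro i
    have h1 : (i : ℕ) % n < n := Nat.mod_lt _ hn
    simp [Nat.mod_eq_of_lt h1, Nat.div_add_mod]
  | succ k ih =>
    intro i
    have hrv : (((rp n hn) i : Fin (2 * n)) : ℕ)
        = n * ((i : ℕ) / n) + (((i : ℕ) % n + 1) % n) := rfl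
    have hlt : ((i : ℕ) % n + 1) % n < n := Nat.mod_lt _ hn
    have hdiv : (((rp n hn) i : Fin (2 * n)) : ℕ) / n = (i : ℕ) / n := by
      rw [hrv, Nat.mul_add_div hn, Nat.div_eq_of_lt hlt, Nat.add_zero]
    have hmod : (((rp n hn) i : Fin (2 * n)) : ℕ) % n = ((i : ℕ) % n + 1) % n := by
      rw [hrv, Nat.mul_add_mod, Nat.mod_eq_of_lt hlt]
    rw [pow_succ, Equiv.Perm.mul_apply, ih, hdiv, hmod]
    congr 1
    have : ((i : ℕ) % n + 1) % n + k ≡ ((i : ℕ) % n + 1) + k [MOD n] :=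
      Nat.ModEq.add_right k (Nat.mod_modEq _ n)
    calc (((i : ℕ) % n + 1) % n + k) % n = (((i : ℕ) % n + 1) + k) % n := this
      _ = ((i : ℕ) % n + (k + 1)) % n := by ring_nf

lemma rp_pow_div (hn : 0 < n) (k : ℕ) (i : Fin (2 * n)) :
    ((((rp n hn) ^ k) i : Fin (2 * n)) : ℕ) / n = (i : ℕ) / n := by
  rw [rp_pow_val hn k i, Nat.mul_add_div hn,
    Nat.div_eq_of_lt (Nat.mod_lt _ hn), Nat.add_zero]

lemma rp_pow_mod (hn : 0 < n) (k : ℕ) (i : Fin (2 * n)) :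
    ((((rp n hn) ^ k) i : Fin (2 * n)) : ℕ) % n = ((i : ℕ) % n + k) % n := by
  rw [rp_pow_val hn k i, Nat.mul_add_mod, Nat.mod_eq_of_lt (Nat.mod_lt _ hn)]

lemma rp_pow_n (hn : 0 < n) : (rp n hn) ^ n = 1 := by
  ext i
  have h := rp_pow_val hn n i
  have h2 : ((i : ℕ) % n + n) % n = (i : ℕ) % n := by
    rw [Nat.add_mod_right, Nat.mod_eq_of_lt (Nat.mod_lt _ hn)]
  have h3 : n * ((i : ℕ) / n) + (i : ℕ) % n = (i : ℕ) := Nat.div_add_mod _ n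
  simp only [Equiv.Perm.coe_one, id_eq]
  rw [h, h2, h3]

lemma rp_pow_mod_n (hn : 0 < n) (m : ℕ) : (rp n hn) ^ m = (rp n hn) ^ (m % n) := by
  conv_lhs => rw [← Nat.div_add_mod m n]
  rw [pow_add, pow_mul, rp_pow_n hn, one_pow, one_mul]

lemma rp_pow_eq (hn : 0 < n) {a b : ℕ} (h : a % n = b % n) :
    (rp n hn) ^ a = (rp n hn) ^ b := by
  rw [rp_pow_mod_n hn a, rp_pow_mod_n hn b, h]

/-- The coset of σ : all σ * r^k, k < n. -/
noncomputable def Fc (n : ℕ) (hn : 0 < n) (σ : Equiv.Perm (Fin (2 * n))) : Finset (Equiv.Perm (Fin (2 * n))) :=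
  Finset.univ.image (fun k : Fin n => σ * (rp n hn) ^ (k : ℕ))

lemma mem_Fc (hn : 0 < n) (σ τ : Equiv.Perm (Fin (2 * n))) :
    τ ∈ Fc n hn σ ↔ ∃ m : ℕ, τ = σ * (rp n hn) ^ m := by
  constructor
  · intro h
    obtain ⟨k, -, hk⟩ := Finset.mem_image.mp h
    exact ⟨(k : ℕ), hk.symm⟩
  · rintro ⟨m, rfl⟩
    refine Finset.mem_image.mpr ⟨⟨m % n, Nat.mod_lt _ hn⟩, Finset.mem_univ _, ?_⟩
    rw [← rp_pow_mod_n hn m]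

lemma Fc_shift (hn : 0 < n) (σ : Equiv.Perm (Fin (2 * n))) (k : ℕ) :
    Fc n hn (σ * (rp n hn) ^ k) = Fc n hn σ := by
  ext τ
  rw [mem_Fc hn, mem_Fc hn]
  constructor
  · rintro ⟨m, rfl⟩
    exact ⟨k + m, by rw [pow_add, mul_assoc]⟩
  · rintro ⟨m, rfl⟩
    refine ⟨m + k * (n - 1), ?_⟩
    rw [mul_assoc, ← pow_add]
    congr 1
    apply rp_pow_eq hn
    have hkn : k + (m + k * (n - 1)) = m + k * n := by
      have h1 : k * n = k * (n - 1) + k := by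
        rw [← Nat.mul_succ, Nat.succ_eq_add_one, Nat.sub_add_cancel hn]
      rw [h1]; ring
    rw [hkn, Nat.add_mul_mod_self_right]

lemma cross_mul (hn : 0 < n) (σ : Equiv.Perm (Fin (2 * n)))
    (hσ : ∀ i : Fin (2 * n), (σ i : ℕ) / n ≠ (i : ℕ) / n) (k : ℕ) :
    ∀ i : Fin (2 * n), ((σ * (rp n hn) ^ k) i : ℕ) / n ≠ (i : ℕ) / n := by
  intro i
  rw [Equiv.Perm.mul_apply]
  have := hσ (((rp n hn) ^ k) i)
  rwa [rp_pow_div hn k i] at this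

lemma blk_le (hn : 0 < n) (i : Fin (2 * n)) : (i : ℕ) / n < 2 :=
  (Nat.div_lt_iff_lt_mul hn).mpr (by have := i.isLt; omega)

lemma shift_mod (hn : 0 < n) {a b : ℕ} (ha : a < n) (hb : b < n) :
    (a + (b + n - a) % n) % n = b := by
  have h1 : (a + (b + n - a) % n) ≡ (a + (b + n - a)) [MOD n] :=
    Nat.ModEq.add_left a (Nat.mod_modEq _ n)
  have h2 : a + (b + n - a) = b + n := by omega
  calc (a + (b + n - a) % n) % n = (a + (b + n - a)) % n := h1
    _ = (b + n) % n := by rw [h2]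
    _ = b % n := Nat.add_mod_right b n
    _ = b := Nat.mod_eq_of_lt hb

lemma mod_inj (hn : 0 < n) {a k k' : ℕ} (hk : k < n) (hk' : k' < n)
    (h : (a + k) % n = (a + k') % n) : k = k' := by
  have h1 : a + k ≡ a + k' [MOD n] := h
  have h2 : k ≡ k' [MOD n] := h1.add_left_cancel' a
  calc k = k % n := (Nat.mod_eq_of_lt hk).symm
    _ = k' % n := h2
    _ = k' := Nat.mod_eq_of_lt hk'

end Stmt4Aux

open Stmt4Aux

/-- For every n > 0, the set of all permutations σ of Fin (2n) with
⌊σ(i)/n⌋ ≠ ⌊i/n⌋ for all i can be partitioned into subsets F such that for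
every ordered pair (i,j) with ⌊j/n⌋ ≠ ⌊i/n⌋, exactly one σ ∈ F has σ(i) = j. -/
theorem stmt4 (n : ℕ) (hn : 0 < n) :
    ∃ P : Finset (Finset (Equiv.Perm (Fin (2 * n)))),
      (∀ F ∈ P, ∀ σ ∈ F, ∀ i : Fin (2 * n), (σ i : ℕ) / n ≠ (i : ℕ) / n) ∧
      (∀ σ : Equiv.Perm (Fin (2 * n)), (∀ i : Fin (2 * n), (σ i : ℕ) / n ≠ (i : ℕ) / n) →
        ∃! F, F ∈ P ∧ σ ∈ F) ∧
      (∀ F ∈ P, ∀ i j : Fin (2 * n), (j : ℕ) / n ≠ (i : ℕ) / n →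
        ∃! σ, σ ∈ F ∧ σ i = j) := by
  classical
  obtain ⟨M, hM⟩ : ∃ M : Finset (Equiv.Perm (Fin (2 * n))),
      M = Finset.univ.filter (fun σ => ∀ i : Fin (2 * n), (σ i : ℕ) / n ≠ (i : ℕ) / n) :=
    ⟨_, rfl⟩
  subst hM
  refine ⟨(Finset.univ.filter
      (fun σ : Equiv.Perm (Fin (2 * n)) => ∀ i : Fin (2 * n), (σ i : ℕ) / n ≠ (i : ℕ) / n)).image
      (Fc n hn), ?_, ?_, ?_⟩
  · -- every member of every F is crossing
    intro F hF σ hσ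
    obtain ⟨σ₀, hσ₀, rfl⟩ := Finset.mem_image.mp hF
    have hσ₀c : ∀ i : Fin (2 * n), (σ₀ i : ℕ) / n ≠ (i : ℕ) / n :=
      (Finset.mem_filter.mp hσ₀).2
    obtain ⟨m, rfl⟩ := (mem_Fc hn σ₀ σ).mp hσ
    exact cross_mul hn σ₀ hσ₀c m
  · -- each crossing σ lies in exactly one F
    intro σ hσ
    refine ⟨Fc n hn σ, ⟨Finset.mem_image.mpr ⟨σ, Finset.mem_filter.mpr ⟨Finset.mem_univ _, hσ⟩, rfl⟩,
      (mem_Fc hn σ σ).mpr ⟨0, by simp⟩⟩, ?_⟩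
    rintro G ⟨hGP, hσG⟩
    obtain ⟨σ₀, hσ₀, rfl⟩ := Finset.mem_image.mp hGP
    obtain ⟨m, rfl⟩ := (mem_Fc hn σ₀ _).mp hσG
    exact (Fc_shift hn σ₀ m).symm
  · -- each F matches each crossing pair exactly once
    intro F hF i j hij
    obtain ⟨σ₀, hσ₀M, rfl⟩ := Finset.mem_image.mp hF
    have hσ₀c : ∀ i : Fin (2 * n), (σ₀ i : ℕ) / n ≠ (i : ℕ) / n :=
      (Finset.mem_filter.mp hσ₀M).2
    obtain ⟨z, hzj⟩ : ∃ z : Fin (2 * n), σ₀ z = j := ⟨σ₀⁻¹ j, Equiv.apply_symm_apply σ₀ j⟩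
    have hzdiv : (z : ℕ) / n = (i : ℕ) / n := by
      have h1 := hσ₀c z
      rw [hzj] at h1
      have h2 := blk_le hn i
      have h3 := blk_le hn j
      have h4 := blk_le hn z
      rcases Nat.le_one_iff_eq_zero_or_eq_one.mp (Nat.le_of_lt_succ h2) with hA | hA <;>
        rcases Nat.le_one_iff_eq_zero_or_eq_one.mp (Nat.le_of_lt_succ h3) with hB | hB <;>
          rcases Nat.le_one_iff_eq_zero_or_eq_one.mp (Nat.le_of_lt_succ h4) with hC | hC <;>
            omega
    have himod : (i : ℕ) % n < n := Nat.mod_lt _ hn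
    have hzmod : (z : ℕ) % n < n := Nat.mod_lt _ hn
    set k₀ : ℕ := ((z : ℕ) % n + n - (i : ℕ) % n) % n with hk₀
    have hk₀lt : k₀ < n := Nat.mod_lt _ hn
    have hrk : ((rp n hn) ^ k₀) i = z := by
      apply Fin.ext
      rw [rp_pow_val hn k₀ i, hk₀, shift_mod hn himod hzmod, ← hzdiv,
        Nat.div_add_mod (z : ℕ) n]
    refine ⟨σ₀ * (rp n hn) ^ k₀,
      ⟨(mem_Fc hn σ₀ _).mpr ⟨k₀, rfl⟩, by rw [Equiv.Perm.mul_apply, hrk, hzj]⟩, ?_⟩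
    rintro τ ⟨hτF, hτij⟩
    obtain ⟨m, rfl⟩ := (mem_Fc hn σ₀ τ).mp hτF
    rw [rp_pow_mod_n hn m] at hτij ⊢
    have hz' : ((rp n hn) ^ (m % n)) i = z := by
      apply σ₀.injective
      rw [hzj, ← hτij, Equiv.Perm.mul_apply]
    have hval := congrArg Fin.val hz'
    rw [rp_pow_val hn (m % n) i] at hval
    have hzval : (z : ℕ) = n * ((i : ℕ) / n) + (z : ℕ) % n := by
      rw [← hzdiv]; exact (Nat.div_add_mod _ n).symm
    have h6 : ((i : ℕ) % n + m % n) % n = (z : ℕ) % n :=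
      Nat.add_left_cancel (hval.trans hzval)
    have h7 : ((i : ℕ) % n + k₀) % n = (z : ℕ) % n := by
      rw [hk₀]; exact shift_mod hn himod hzmod
    have h8 : m % n = k₀ := mod_inj hn (Nat.mod_lt _ hn) hk₀lt (h6.trans h7.symm)
    rw [h8]
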